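/- arXiv:1308.1228 — 5 statements merged into one kernel-verified Lean document; each statement's English description precedes it below -/
import Mathlib

section
/- If R is a bisimulation up to bisimilarity between two K × (−)^A-coalgebras, then R is contained in bisimilarity: whenever x R y, we have x ∼ y. -/
/-- A bisimulation between `K × (−)^A`-coalgebras `(X,(oX,δX))` and `(Y,(oY,δY))`. -/
def IsBisim {X Y A K : Type} (oX : X → K) (δX : X → A → X)
    (oY : Y → K) (δY : Y → A → Y) (R : X → Y → Prop) : Prop :=
  ∀ x y, R x y → oX x = oY y ∧ ∀ a, R (δX x a) (δY y a)

/-- Bisimilarity: the union of all bisimulations. -/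
def Bisimilar {X Y A K : Type} (oX : X → K) (δX : X → A → X)
    (oY : Y → K) (δY : Y → A → Y) (x : X) (y : Y) : Prop :=
  ∃ R, IsBisim oX δX oY δY R ∧ R x y

/-- A bisimulation up to bisimilarity. -/
def IsBisimUpToBisim {X Y A K : Type} (oX : X → K) (δX : X → A → X)
    (oY : Y → K) (δY : Y → A → Y) (R : X → Y → Prop) : Prop :=
  ∀ x y, R x y → oX x = oY y ∧
    ∀ a, ∃ x' y', Bisimilar oX δX oX δX (δX x a) x' ∧ R x' y' ∧
      Bisimilar oY δY oY δY y' (δY y a)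

theorem bisimilar_refl {X A K : Type} (oX : X → K) (δX : X → A → X) (x : X) :
    Bisimilar oX δX oX δX x x :=
  ⟨Eq, fun a b hab => by subst hab; exact ⟨rfl, fun _ => rfl⟩, rfl⟩

theorem bisimilar_obs {X Y A K : Type} (oX : X → K) (δX : X → A → X)
    {oY : Y → K} {δY : Y → A → Y} {x : X} {y : Y}
    (h : Bisimilar oX δX oY δY x y) : oX x = oY y := by
  obtain ⟨R, hR, hxy⟩ := h
  exact (hR x y hxy).1

theorem bisimilar_delta {X Y A K : Type} (oX : X → K) (δX : X → A → X)
    {oY : Y → K} {δY : Y → A → Y} {x : X} {y : Y}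
    (h : Bisimilar oX δX oY δY x y) (a : A) :
    Bisimilar oX δX oY δY (δX x a) (δY y a) := by
  obtain ⟨R, hR, hxy⟩ := h
  exact ⟨R, hR, (hR x y hxy).2 a⟩

theorem bisimilar_trans {X Y Z A K : Type} {oX : X → K} {δX : X → A → X}
    {oY : Y → K} {δY : Y → A → Y} {oZ : Z → K} {δZ : Z → A → Z}
    {x : X} {y : Y} {z : Z}
    (h1 : Bisimilar oX δX oY δY x y) (h2 : Bisimilar oY δY oZ δZ y z) :
    Bisimilar oX δX oZ δZ x z := by
  obtain ⟨R1, hR1, h1⟩ := h1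
  obtain ⟨R2, hR2, h2⟩ := h2
  refine ⟨fun u w => ∃ v, R1 u v ∧ R2 v w, ?_, y, h1, h2⟩
  rintro u w ⟨v, huv, hvw⟩
  obtain ⟨ho1, hd1⟩ := hR1 u v huv
  obtain ⟨ho2, hd2⟩ := hR2 v w hvw
  exact ⟨ho1.trans ho2, fun a => ⟨δY v a, hd1 a, hd2 a⟩⟩

/-- Every bisimulation up to bisimilarity is contained in bisimilarity. -/
theorem bisimUpToBisim_le_bisimilar {X Y A K : Type}
    (oX : X → K) (δX : X → A → X) (oY : Y → K) (δY : Y → A → Y)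
    (R : X → Y → Prop) (h : IsBisimUpToBisim oX δX oY δY R) :
    ∀ x y, R x y → Bisimilar oX δX oY δY x y := by
  intro x y hxy
  refine ⟨fun u v => ∃ u' v', Bisimilar oX δX oX δX u u' ∧ R u' v' ∧
      Bisimilar oY δY oY δY v' v, ?_, x, y, bisimilar_refl oX δX x, hxy,
      bisimilar_refl oY δY y⟩
  rintro u v ⟨u', v', hu, huv, hv⟩
  obtain ⟨ho, hδ⟩ := h u' v' huv
  constructor
  · rw [bisimilar_obs oX δX hu, ho, bisimilar_obs oY δY hv]
  · intro a
    obtain ⟨x', y', h1, h2, h3⟩ := hδ a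
    exact ⟨x', y', bisimilar_trans (bisimilar_delta oX δX hu a) h1, h2,
      bisimilar_trans h3 (bisimilar_delta oY δY hv a)⟩
end

section
/- In the grammar automaton (P_ω(X*),(ô,δ̂)) generated from a context-free grammar in Greibach normal form, for all words s, t ∈ X* the product rule holds: ô({st}) = ô({s}) ∧ ô({t}), and {st}_a = {s}_a·{t} ∪ i(ô({s}))·{t}_a. -/
/-- Language concatenation `S·T = { st | s ∈ S, t ∈ T }`. -/
def lcat {Y : Type} (S T : Set (List Y)) : Set (List Y) :=
  Set.image2 (· ++ ·) S T

/-- `i : B → P(Y*)`, sending `1` to `{ε}` and `0` to `∅` (Booleans as `Prop`). -/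
def iB {Y : Type} (p : Prop) : Set (List Y) := {w | w = [] ∧ p}

section GrammarAutomaton

variable {X A : Type} (o : X → Prop) (δ : X → A → Set (List X))

/-- Output `ô({s})` of a single word of nonterminals:
`ô({ε}) = 1`, `ô({xw}) = o(x) ∧ ô({w})`. -/
def oWord : List X → Prop
  | [] => True
  | x :: w => o x ∧ oWord w

/-- Derivative `{s}_a` of a single word of nonterminals:
`{ε}_a = ∅`, `{xw}_a = x_a·{w} ∪ i(o(x))·{w}_a`. -/
def dWord : List X → A → Set (List X)
  | [], _ => ∅
  | x :: w, a => lcat (δ x a) {w} ∪ lcat (iB (o x)) (dWord w a)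

/-- Output `ô(S) = ⋁_{s ∈ S} ô({s})` of a language of words of nonterminals. -/
def oSet (S : Set (List X)) : Prop := ∃ s ∈ S, oWord o s

/-- Derivative `S_a = ⋃_{s ∈ S} {s}_a`. -/
def dSet (S : Set (List X)) (a : A) : Set (List X) :=
  ⋃ s ∈ S, dWord o δ s a

/-- Iterated word derivative: `S_ε = S`, `S_{aw} = (S_a)_w`. -/
def dSetWord (S : Set (List X)) : List A → Set (List X)
  | [] => S
  | a :: w => dSetWord (dSet o δ S a) w

/-- One derivation step of the grammar in Greibach normal form determined by
`(o, δ)`: productions are `x → ε` when `o x` holds, and `x → aw` when `w ∈ δ x a`. -/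
inductive GStep : List (X ⊕ A) → List (X ⊕ A) → Prop
  | eps (l r : List (X ⊕ A)) (x : X) (h : o x) :
      GStep (l ++ Sum.inl x :: r) (l ++ r)
  | prod (l r : List (X ⊕ A)) (x : X) (a : A) (w : List X) (h : w ∈ δ x a) :
      GStep (l ++ Sum.inl x :: r) (l ++ Sum.inr a :: w.map Sum.inl ++ r)

/-- Derivability `⇒*`: the reflexive–transitive closure of single derivation steps. -/
def GDerives : List (X ⊕ A) → List (X ⊕ A) → Prop :=
  Relation.ReflTransGen (GStep o δ)

end GrammarAutomaton



lemma lcat_assoc {Y : Type} (S T U : Set (List Y)) :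
    lcat (lcat S T) U = lcat S (lcat T U) :=
  Set.image2_assoc (fun _ _ _ => List.append_assoc _ _ _)

lemma lcat_union_left {Y : Type} (S T U : Set (List Y)) :
    lcat (S ∪ T) U = lcat S U ∪ lcat T U := Set.image2_union_left

lemma lcat_union_right {Y : Type} (S T U : Set (List Y)) :
    lcat S (T ∪ U) = lcat S T ∪ lcat S U := Set.image2_union_right

lemma singleton_lcat {Y : Type} (u v : List Y) :
    ({u ++ v} : Set (List Y)) = lcat {u} {v} := by
  ext w; simp [lcat]

lemma iB_and {Y : Type} (p q : Prop) :
    lcat (iB p) (iB q) = (iB (p ∧ q) : Set (List Y)) := by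
  ext w
  constructor
  · rintro ⟨u, ⟨rfl, hp⟩, v, ⟨rfl, hq⟩, rfl⟩; exact ⟨rfl, hp, hq⟩
  · rintro ⟨rfl, hp, hq⟩; exact ⟨[], ⟨rfl, hp⟩, [], ⟨rfl, hq⟩, rfl⟩

lemma lcat_empty_left {Y : Type} (S : Set (List Y)) : lcat ∅ S = ∅ := by
  simp [lcat]

lemma lcat_iB_true {Y : Type} {p : Prop} (hp : p) (S : Set (List Y)) :
    lcat (iB p) S = S := by
  ext w
  constructor
  · rintro ⟨u, ⟨rfl, -⟩, v, hv, rfl⟩; exact hv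
  · intro hw; exact ⟨[], ⟨rfl, hp⟩, w, hw, rfl⟩

/-- Product rule for words: in the grammar automaton of a grammar in Greibach
normal form, `ô({st}) = ô({s}) ∧ ô({t})` and
`{st}_a = {s}_a·{t} ∪ i(ô({s}))·{t}_a`. -/
theorem product_rule_words {X A : Type} [Finite X]
    (o : X → Prop) (δ : X → A → Set (List X))
    (hfin : ∀ x a, (δ x a).Finite)
    (s t : List X) (a : A) :
    (oWord o (s ++ t) ↔ oWord o s ∧ oWord o t) ∧
      dWord o δ (s ++ t) a =
        lcat (dWord o δ s a) {t} ∪ lcat (iB (oWord o s)) (dWord o δ t a) := by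
  induction s with
  | nil =>
    refine ⟨by simp [oWord], ?_⟩
    simp only [List.nil_append, dWord]
    rw [lcat_empty_left, lcat_iB_true (by trivial : oWord o ([] : List X))]
    simp
  | cons x s ih =>
    obtain ⟨iho, ihd⟩ := ih
    refine ⟨by simp [oWord, iho, and_assoc], ?_⟩
    show lcat (δ x a) {s ++ t} ∪ lcat (iB (o x)) (dWord o δ (s ++ t) a) = _
    show _ = lcat (lcat (δ x a) {s} ∪ lcat (iB (o x)) (dWord o δ s a)) {t} ∪
        lcat (iB (o x ∧ oWord o s)) (dWord o δ t a)
    rw [ihd, singleton_lcat s t, ← lcat_assoc, lcat_union_right, lcat_union_left,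
      lcat_assoc (iB (o x)) (dWord o δ s a) ({t} : Set (List X)),
      ← lcat_assoc (iB (o x)) (iB (oWord o s)), iB_and, Set.union_assoc]
end

section
/- Let (X,p) be a context-free grammar in Greibach normal form. For all s, t ∈ X* and a ∈ A, if t ∈ {s}_a in the grammar automaton, then s ⇒* at in the grammar (at is derivable from s). -/
/-- If `t ∈ {s}_a` in the grammar automaton of a grammar in Greibach normal form,
then `s ⇒* at` in the grammar. -/
theorem mem_dWord_derives {X A : Type} [Finite X]
    (o : X → Prop) (δ : X → A → Set (List X))
    (hfin : ∀ x a, (δ x a).Finite)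
    (s t : List X) (a : A) (h : t ∈ dWord o δ s a) :
    GDerives o δ (s.map Sum.inl) (Sum.inr a :: t.map Sum.inl) := by
  induction s generalizing t with
  | nil => exact absurd h (Set.notMem_empty t)
  | cons x w ih =>
    rcases h with ⟨v, hv, w', hw', rfl⟩ | ⟨e, he, t', ht', rfl⟩
    · rcases hw' with rfl
      apply Relation.ReflTransGen.single
      have := @GStep.prod X A o δ [] (w'.map Sum.inl) x a v hv
      simpa using this
    · rcases he with ⟨rfl, hox⟩
      have step : GStep o δ ((x :: w).map Sum.inl) (w.map Sum.inl) := by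
        have := @GStep.eps X A o δ [] (w.map Sum.inl) x hox
        simpa using this
      exact Relation.ReflTransGen.head step (by simpa [GDerives] using ih t' ht')
end

section
/- Let (X,p) be a context-free grammar in Greibach normal form. For every s ∈ X* and w ∈ A*: s ⇒* w if and only if ô({s}_w) = 1 in the grammar automaton generated from (X,p). -/
section Proof

variable {X A : Type} {o : X → Prop} {δ : X → A → Set (List X)}

/-- Leftmost generation from a mixed string. -/
inductive GenM (o : X → Prop) (δ : X → A → Set (List X)) : List (X ⊕ A) → List A → Prop
  | nil : GenM o δ [] []
  | term (a : A) (m : List (X ⊕ A)) (w : List A) :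
      GenM o δ m w → GenM o δ (Sum.inr a :: m) (a :: w)
  | eps (x : X) (m : List (X ⊕ A)) (w : List A) :
      o x → GenM o δ m w → GenM o δ (Sum.inl x :: m) w
  | prod (x : X) (a : A) (u : List X) (m : List (X ⊕ A)) (w : List A) :
      u ∈ δ x a → GenM o δ (u.map Sum.inl ++ m) w →
      GenM o δ (Sum.inl x :: m) (a :: w)

lemma genM_insert_eps {x : X} (hx : o x) {m : List (X ⊕ A)} {w : List A}
    (h : GenM o δ m w) :
    ∀ l r, m = l ++ r → GenM o δ (l ++ Sum.inl x :: r) w := by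
  induction h with
  | nil =>
    intro l r hm
    obtain ⟨rfl, rfl⟩ : l = [] ∧ r = [] := by
      cases l <;> simp_all
    exact GenM.eps x [] [] hx GenM.nil
  | term a m w h ih =>
    intro l r hm
    cases l with
    | nil =>
      simp only [List.nil_append] at hm ⊢
      subst hm
      exact GenM.eps x _ _ hx (GenM.term a m w h)
    | cons y l' =>
      simp only [List.cons_append] at hm
      rw [List.cons_eq_cons] at hm
      obtain ⟨rfl, hm⟩ := hm
      exact GenM.term a _ _ (ih l' r hm)
  | eps z m w hz h ih =>
    intro l r hm
    cases l with
    | nil =>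
      simp only [List.nil_append] at hm ⊢
      subst hm
      exact GenM.eps x _ _ hx (GenM.eps z m w hz h)
    | cons y l' =>
      simp only [List.cons_append] at hm
      rw [List.cons_eq_cons] at hm
      obtain ⟨rfl, hm⟩ := hm
      exact GenM.eps z _ _ hz (ih l' r hm)
  | prod z a u m w hu h ih =>
    intro l r hm
    cases l with
    | nil =>
      simp only [List.nil_append] at hm ⊢
      subst hm
      exact GenM.eps x _ _ hx (GenM.prod z a u m w hu h)
    | cons y l' =>
      simp only [List.cons_append] at hm
      rw [List.cons_eq_cons] at hm
      obtain ⟨rfl, hm⟩ := hm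
      refine GenM.prod z a u _ _ hu ?_
      have := ih (u.map Sum.inl ++ l') r (by simp [hm])
      simpa using this

lemma genM_insert_prod {x : X} {a : A} {u : List X} (hu : u ∈ δ x a)
    {m : List (X ⊕ A)} {w : List A} (h : GenM o δ m w) :
    ∀ l r, m = l ++ Sum.inr a :: u.map Sum.inl ++ r →
      GenM o δ (l ++ Sum.inl x :: r) w := by
  induction h with
  | nil =>
    intro l r hm
    exfalso
    cases l <;> simp_all
  | term b m w h ih =>
    intro l r hm
    cases l with
    | nil =>
      simp only [List.nil_append, List.cons_append] at hm ⊢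
      rw [List.cons_eq_cons] at hm
      obtain ⟨hba, hm⟩ := hm
      obtain rfl : b = a := Sum.inr.inj hba
      have : m = u.map Sum.inl ++ r := by simpa using hm
      subst this
      exact GenM.prod x _ u r w hu h
    | cons y l' =>
      simp only [List.cons_append] at hm
      rw [List.cons_eq_cons] at hm
      obtain ⟨rfl, hm⟩ := hm
      exact GenM.term b _ _ (ih l' r (by simpa using hm))
  | eps z m w hz h ih =>
    intro l r hm
    cases l with
    | nil => simp_all
    | cons y l' =>
      simp only [List.cons_append] at hm
      rw [List.cons_eq_cons] at hm
      obtain ⟨rfl, hm⟩ := hm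
      exact GenM.eps z _ _ hz (ih l' r (by simpa using hm))
  | prod z b v m w hv h ih =>
    intro l r hm
    cases l with
    | nil => simp_all
    | cons y l' =>
      simp only [List.cons_append] at hm
      rw [List.cons_eq_cons] at hm
      obtain ⟨rfl, hm⟩ := hm
      refine GenM.prod z b v _ _ hv ?_
      have := ih (v.map Sum.inl ++ l') r (by simp [hm])
      simpa using this

lemma genM_of_step {m m' : List (X ⊕ A)} {w : List A}
    (hs : GStep o δ m m') (h : GenM o δ m' w) : GenM o δ m w := by
  cases hs with
  | eps l r x hx => exact genM_insert_eps hx h l r rfl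
  | prod l r x a u hu => exact genM_insert_prod hu h l r (by simp)

lemma genM_terminals (w : List A) : GenM o δ (w.map Sum.inr) w := by
  induction w with
  | nil => exact GenM.nil
  | cons a w ih => exact GenM.term a _ _ ih

lemma genM_of_derives {m : List (X ⊕ A)} {w : List A}
    (h : GDerives o δ m (w.map Sum.inr)) : GenM o δ m w := by
  induction h using Relation.ReflTransGen.head_induction_on with
  | refl => exact genM_terminals w
  | head hs _ ih => exact genM_of_step hs ih

lemma gstep_cons {m m' : List (X ⊕ A)} (y : X ⊕ A)
    (h : GStep o δ m m') : GStep o δ (y :: m) (y :: m') := by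
  cases h with
  | eps l r x hx =>
    have := GStep.eps (o := o) (δ := δ) (y :: l) r x hx
    simpa using this
  | prod l r x a u hu =>
    have := GStep.prod (o := o) (δ := δ) (y :: l) r x a u hu
    simpa using this

lemma gderives_cons {m m' : List (X ⊕ A)} (y : X ⊕ A)
    (h : GDerives o δ m m') : GDerives o δ (y :: m) (y :: m') := by
  induction h with
  | refl => exact Relation.ReflTransGen.refl
  | tail _ hs ih => exact ih.tail (gstep_cons y hs)

lemma derives_of_genM {m : List (X ⊕ A)} {w : List A}
    (h : GenM o δ m w) : GDerives o δ m (w.map Sum.inr) := by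
  induction h with
  | nil => exact Relation.ReflTransGen.refl
  | term a m w _ ih => exact gderives_cons _ ih
  | eps x m w hx _ ih =>
    refine Relation.ReflTransGen.head ?_ ih
    have := GStep.eps (o := o) (δ := δ) [] m x hx
    simpa using this
  | prod x a u m w hu _ ih =>
    refine Relation.ReflTransGen.head
      (b := Sum.inr a :: u.map Sum.inl ++ m) ?_ ?_
    · have := GStep.prod (o := o) (δ := δ) [] m x a u hu
      simpa using this
    · have := gderives_cons (o := o) (δ := δ) (Sum.inr a) ih
      simpa [GDerives] using this

lemma genM_iff_derives {m : List (X ⊕ A)} {w : List A} :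
    GDerives o δ m (w.map Sum.inr) ↔ GenM o δ m w :=
  ⟨genM_of_derives, derives_of_genM⟩

/- ### Automaton side -/

lemma mem_dWord_cons {x : X} {s : List X} {a : A} {t : List X} :
    t ∈ dWord o δ (x :: s) a ↔
      (∃ u ∈ δ x a, t = u ++ s) ∨ (o x ∧ t ∈ dWord o δ s a) := by
  simp only [dWord, lcat, iB, Set.mem_union, Set.mem_image2, Set.mem_singleton_iff,
    Set.mem_setOf_eq]
  constructor
  · rintro (⟨u, hu, v, rfl, rfl⟩ | ⟨u, ⟨rfl, hx⟩, v, hv, rfl⟩)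
    · exact Or.inl ⟨u, hu, rfl⟩
    · exact Or.inr ⟨hx, by simpa using hv⟩
  · rintro (⟨u, hu, rfl⟩ | ⟨hx, ht⟩)
    · exact Or.inl ⟨u, hu, s, rfl, rfl⟩
    · exact Or.inr ⟨[], ⟨rfl, hx⟩, t, ht, rfl⟩

lemma oSet_dSetWord_iff (w : List A) :
    ∀ S : Set (List X), oSet o (dSetWord o δ S w) ↔
      ∃ s ∈ S, oSet o (dSetWord o δ {s} w) := by
  induction w with
  | nil =>
    intro S
    simp only [dSetWord, oSet]
    constructor
    · rintro ⟨s, hs, hw⟩; exact ⟨s, hs, s, rfl, hw⟩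
    · rintro ⟨s, hs, t, rfl, hw⟩; exact ⟨_, hs, hw⟩
  | cons a w ih =>
    intro S
    simp only [dSetWord]
    rw [ih]
    constructor
    · rintro ⟨t, ht, hw⟩
      simp only [dSet, Set.mem_iUnion] at ht
      obtain ⟨s, hs, ht⟩ := ht
      refine ⟨s, hs, ?_⟩
      rw [ih]
      refine ⟨t, ?_, hw⟩
      simp [dSet, ht]
    · rintro ⟨s, hs, hw⟩
      rw [ih] at hw
      obtain ⟨t, ht, hw⟩ := hw
      simp only [dSet, Set.mem_iUnion, Set.mem_singleton_iff] at ht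
      obtain ⟨s', rfl, ht⟩ := ht
      refine ⟨t, ?_, hw⟩
      simp only [dSet, Set.mem_iUnion]
      exact ⟨_, hs, ht⟩

/-- `F s w` := `ô({s}_w)`. -/
lemma F_nil (s : List X) : oSet o (dSetWord o δ {s} []) ↔ oWord o s := by
  simp only [dSetWord, oSet, Set.mem_singleton_iff]
  exact ⟨fun ⟨t, ht, h⟩ => ht ▸ h, fun h => ⟨s, rfl, h⟩⟩

lemma F_cons (s : List X) (a : A) (w : List A) :
    oSet o (dSetWord o δ {s} (a :: w)) ↔
      ∃ t ∈ dWord o δ s a, oSet o (dSetWord o δ {t} w) := by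
  simp only [dSetWord]
  rw [oSet_dSetWord_iff]
  constructor
  · rintro ⟨t, ht, hw⟩
    simp only [dSet, Set.mem_iUnion, Set.mem_singleton_iff] at ht
    obtain ⟨s', rfl, ht⟩ := ht
    exact ⟨t, ht, hw⟩
  · rintro ⟨t, ht, hw⟩
    exact ⟨t, by simp [dSet, ht], hw⟩

lemma genM_of_F : ∀ (w : List A) (s : List X),
    oSet o (dSetWord o δ {s} w) → GenM o δ (s.map Sum.inl) w := by
  intro w
  induction w with
  | nil =>
    intro s h
    rw [F_nil] at h
    induction s with
    | nil => exact GenM.nil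
    | cons x s ih =>
      obtain ⟨hx, hs⟩ := h
      exact GenM.eps x _ _ hx (ih hs)
  | cons a w ih =>
    intro s h
    rw [F_cons] at h
    obtain ⟨t, ht, hw⟩ := h
    have hgen := ih t hw
    clear hw
    induction s with
    | nil => simp [dWord] at ht
    | cons x s ihs =>
      rw [mem_dWord_cons] at ht
      rcases ht with ⟨u, hu, rfl⟩ | ⟨hx, ht⟩
      · refine GenM.prod x a u _ _ hu ?_
        simpa using hgen
      · exact GenM.eps x _ _ hx (ihs ht)

lemma F_of_genM {m : List (X ⊕ A)} {w : List A} (h : GenM o δ m w) :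
    ∀ s : List X, m = s.map Sum.inl → oSet o (dSetWord o δ {s} w) := by
  induction h with
  | nil =>
    intro s hm
    obtain rfl : s = [] := by cases s <;> simp_all
    rw [F_nil]; trivial
  | term a m w _ _ =>
    intro s hm
    exfalso; cases s <;> simp_all
  | eps x m w hx _ ih =>
    intro s hm
    cases s with
    | nil => simp at hm
    | cons y s =>
      simp only [List.map_cons] at hm
      rw [List.cons_eq_cons] at hm
      obtain ⟨hxy, hm⟩ := hm
      obtain rfl := Sum.inl.inj hxy
      have hF := ih s hm
      cases w with
      | nil =>
        rw [F_nil] at hF ⊢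
        exact ⟨hx, hF⟩
      | cons a w =>
        rw [F_cons] at hF ⊢
        obtain ⟨t, ht, hw⟩ := hF
        exact ⟨t, mem_dWord_cons.2 (Or.inr ⟨hx, ht⟩), hw⟩
  | prod x a u m w hu _ ih =>
    intro s hm
    cases s with
    | nil => simp at hm
    | cons y s =>
      simp only [List.map_cons] at hm
      rw [List.cons_eq_cons] at hm
      obtain ⟨hxy, hm⟩ := hm
      obtain rfl := Sum.inl.inj hxy
      have hF := ih (u ++ s) (by simp [hm])
      rw [F_cons]
      exact ⟨u ++ s, mem_dWord_cons.2 (Or.inl ⟨u, hu, rfl⟩), hF⟩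

end Proof

/-- For every `s ∈ X*` and `w ∈ A*`: `s ⇒* w` iff `ô({s}_w) = 1`
in the grammar automaton generated from the grammar in Greibach normal form. -/
theorem derives_iff_oSet {X A : Type} [Finite X]
    (o : X → Prop) (δ : X → A → Set (List X))
    (hfin : ∀ x a, (δ x a).Finite)
    (s : List X) (w : List A) :
    GDerives o δ (s.map Sum.inl) (w.map Sum.inr) ↔
      oSet o (dSetWord o δ {s} w) := by
  rw [genM_iff_derives]
  exact ⟨fun h => F_of_genM h s rfl, genM_of_F w s⟩
end

section
/- For the unique semiring morphism (O,Δ) from the free idempotent semiring P_ω((X+A)*) to the idempotent semiring B × P_ω((X+A)*)^A extending the assignment x ↦ (o(x), λa.x_a) and b ↦ (0, λa.i(b=a?)), we have (O,Δ) = (ô,δ̂), where (ô,δ̂) is the inductively defined grammar-automaton extension on P_ω((X+A)*). -/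
section PairSemiring

variable {X A : Type}

/-- The carrier `B × P_ω((X+A)*)^A`. -/
abbrev Pair (X A : Type) : Type := Prop × (A → Set (List (X ⊕ A)))

/-- `𝟘 = (0, λa.∅)`. -/
def pZero : Pair X A := (False, fun _ => ∅)

/-- `𝟙 = (1, λa.∅)`. -/
def pOne : Pair X A := (True, fun _ => ∅)

/-- `(o₁,δ₁) ⊕ (o₂,δ₂) = (o₁ ∨ o₂, λa. δ₁(a) ∪ δ₂(a))`. -/
def pAdd (p q : Pair X A) : Pair X A :=
  (p.1 ∨ q.1, fun a => p.2 a ∪ q.2 a)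

/-- `(o₁,δ₁) ⊗ (o₂,δ₂) =
(o₁ ∧ o₂, λa. δ₁(a)·(i(o₂) ∪ ⋃_{b∈A} {b}·δ₂(b)) ∪ i(o₁)·δ₂(a))`. -/
def pMul (p q : Pair X A) : Pair X A :=
  (p.1 ∧ q.1, fun a =>
    lcat (p.2 a) (iB q.1 ∪ ⋃ b : A, lcat {[Sum.inr b]} (q.2 b)) ∪
      lcat (iB p.1) (q.2 a))

end PairSemiring

section WeakGNF

variable {X A : Type} (o : X → Prop) (δ : X → A → Set (List (X ⊕ A)))

/-- Output `ô({s})` of a single word over `X + A` (weak Greibach normal form):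
`ô({ε}) = 1`, `ô({xs}) = o(x) ∧ ô({s})`, `ô({bs}) = 0`. -/
def oW : List (X ⊕ A) → Prop
  | [] => True
  | Sum.inl x :: s => o x ∧ oW s
  | Sum.inr _ :: _ => False

/-- Derivative `{s}_a` of a single word over `X + A`:
`{ε}_a = ∅`;
`{xs}_a = x_a·(i(ô({s})) ∪ ⋃_b {b}·{s}_b) ∪ i(o(x))·{s}_a`;
`{bs}_a = i(b = a?)·(i(ô({s})) ∪ ⋃_c {c}·{s}_c)`. -/
def dW : List (X ⊕ A) → A → Set (List (X ⊕ A))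
  | [], _ => ∅
  | Sum.inl x :: s, a =>
      lcat (δ x a) (iB (oW o s) ∪ ⋃ b : A, lcat {[Sum.inr b]} (dW s b)) ∪
        lcat (iB (o x)) (dW s a)
  | Sum.inr b :: s, a =>
      lcat (iB (b = a)) (iB (oW o s) ∪ ⋃ c : A, lcat {[Sum.inr c]} (dW s c))

/-- `ô(S) = ⋁_{s ∈ S} ô({s})`. -/
def oS (S : Set (List (X ⊕ A))) : Prop := ∃ s ∈ S, oW o s

/-- `S_a = ⋃_{s ∈ S} {s}_a`. -/
def dS (S : Set (List (X ⊕ A))) (a : A) : Set (List (X ⊕ A)) :=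
  ⋃ s ∈ S, dW o δ s a

end WeakGNF


lemma lcat_singleton {Y : Type} (s t : List Y) :
    lcat {s} {t} = ({s ++ t} : Set (List Y)) := by
  simp [lcat]

lemma oS_singleton {X A : Type} (o : X → Prop) (s : List (X ⊕ A)) :
    oS o {s} = oW o s := by
  simp [oS]

lemma dS_singleton {X A : Type} (o : X → Prop) (δ : X → A → Set (List (X ⊕ A)))
    (s : List (X ⊕ A)) (a : A) : dS o δ {s} a = dW o δ s a := by
  simp [dS]

/-- The unique semiring morphism `(O,Δ)` from the free idempotent semiring
`P_ω((X+A)*)` to `B × P_ω((X+A)*)^A` extending `x ↦ (o(x), λa.x_a)` and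
`b ↦ (0, λa.i(b=a?))` coincides with the inductively defined grammar-automaton
extension `(ô,δ̂)`: any morphism with these properties agrees with `(ô,δ̂)` on
all finite languages. -/
theorem morphism_eq_extension {X A : Type} [Finite X] [Fintype A]
    (o : X → Prop) (δ : X → A → Set (List (X ⊕ A)))
    (hfin : ∀ x a, (δ x a).Finite)
    (F : Set (List (X ⊕ A)) → Pair X A)
    (hzero : F ∅ = pZero)
    (hone : F {[]} = pOne)
    (hadd : ∀ S T : Set (List (X ⊕ A)), S.Finite → T.Finite →
      F (S ∪ T) = pAdd (F S) (F T))
    (hmul : ∀ S T : Set (List (X ⊕ A)), S.Finite → T.Finite →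
      F (lcat S T) = pMul (F S) (F T))
    (hvar : ∀ x : X, F {[Sum.inl x]} = (o x, fun a => δ x a))
    (hltr : ∀ b : A, F {[Sum.inr b]} = (False, fun a => iB (b = a))) :
    ∀ S : Set (List (X ⊕ A)), S.Finite →
      F S = (oS o S, fun a => dS o δ S a) := by
  have Fsing : ∀ s : List (X ⊕ A), F {s} = (oW o s, fun a => dW o δ s a) := by
    intro s
    induction s with
    | nil => simpa [oW, dW, pOne] using hone
    | cons u t ih =>
      have hcons : ({u :: t} : Set (List (X ⊕ A))) = lcat {[u]} {t} := by
        simp [lcat]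
      rw [hcons, hmul _ _ (Set.finite_singleton _) (Set.finite_singleton _), ih]
      cases u with
      | inl x =>
        rw [hvar]
        rfl
      | inr b =>
        rw [hltr]
        apply Prod.ext
        · simp [pMul, oW]
        · funext a
          simp only [pMul, dW]
          have : iB (Y := X ⊕ A) False = ∅ := by
            ext w; simp [iB]
          simp [this, lcat]
  intro S hS
  refine Set.Finite.induction_on S hS ?_ ?_
  · rw [hzero]
    apply Prod.ext
    · simp [pZero, oS]
    · funext a; simp [pZero, dS]
  · intro s T hsT hT ihT
    have : (insert s T : Set (List (X ⊕ A))) = {s} ∪ T := by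
      simp
    rw [this, hadd _ _ (Set.finite_singleton _) hT, Fsing, ihT]
    apply Prod.ext
    · show (oW o s ∨ oS o T) = oS o ({s} ∪ T)
      apply propext
      constructor
      · rintro (h | ⟨t, ht, h⟩)
        · exact ⟨s, Or.inl rfl, h⟩
        · exact ⟨t, Or.inr ht, h⟩
      · rintro ⟨t, (rfl | ht), h⟩
        · exact Or.inl h
        · exact Or.inr ⟨t, ht, h⟩
    · funext a
      show dW o δ s a ∪ dS o δ T a = dS o δ ({s} ∪ T) a
      simp [dS]
end
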